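/- Let n, k, ℓ be positive integers with ℓ ≤ n, and let g_1, …, g_n ∈ ℝ^k. Suppose that for every w ∈ {1,−1}^k there exists a subset S ⊆ {1,…,n} with |S| ≤ ℓ such that w lies in the real linear span of {g_i : i ∈ S}. Then C(n,ℓ)·2^ℓ ≥ 2^k, where C(n,ℓ) denotes the binomial coefficient n choose ℓ. -/

import Mathlib

open Module

lemma proj_lemma (k : ℕ) : ∀ (d : ℕ) (V : Submodule ℝ (Fin k → ℝ)), Module.finrank ℝ V ≤ d →
    ∃ T : Finset (Fin k), T.card ≤ Module.finrank ℝ V ∧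
      ∀ v ∈ V, (∀ i ∈ T, v i = 0) → v = 0 := by
  intro d
  induction d with
  | zero =>
    intro V hV
    refine ⟨∅, by simp, ?_⟩
    have : V = ⊥ := Submodule.finrank_eq_zero.mp (Nat.le_zero.mp hV)
    intro v hv _
    simpa [this] using hv
  | succ d ih =>
    intro V hV
    by_cases hb : V = ⊥
    · refine ⟨∅, by simp, ?_⟩
      intro v hv _
      simpa [hb] using hv
    · obtain ⟨v0, hv0V, hv0⟩ := Submodule.exists_mem_ne_zero_of_ne_bot hb
      obtain ⟨i, hi⟩ : ∃ i, v0 i ≠ 0 := by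
        by_contra hc
        push_neg at hc
        exact hv0 (funext hc)
      set V' := V ⊓ LinearMap.ker (LinearMap.proj (R := ℝ) (φ := fun _ : Fin k => ℝ) i) with hV'
      have hlt : V' < V := by
        refine lt_of_le_of_ne inf_le_left ?_
        intro hEq
        have : v0 ∈ V' := hEq ▸ hv0V
        exact hi this.2
      have hfr : Module.finrank ℝ V' < Module.finrank ℝ V :=
        Submodule.finrank_lt_finrank_of_lt hlt
      obtain ⟨T', hT'c, hT'⟩ := ih V' (by omega)
      refine ⟨insert i T', ?_, ?_⟩
      · calc (insert i T').card ≤ T'.card + 1 := Finset.card_insert_le _ _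
          _ ≤ Module.finrank ℝ V' + 1 := by omega
          _ ≤ Module.finrank ℝ V := by omega
      · intro v hv hz
        refine hT' v ⟨hv, ?_⟩ (fun j hj => hz j (Finset.mem_insert_of_mem hj))
        exact hz i (Finset.mem_insert_self _ _)

lemma count_in_span {k ℓ : ℕ} (V : Submodule ℝ (Fin k → ℝ)) [DecidablePred (· ∈ V)]
    (hV : Module.finrank ℝ V ≤ ℓ) :
    ((Fintype.piFinset (fun _ : Fin k => ({1,-1} : Finset ℝ))).filter (· ∈ V)).card ≤ 2 ^ ℓ := by
  classical
  obtain ⟨T, hTc, hT⟩ := proj_lemma k ℓ V hV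
  have hTℓ : T.card ≤ ℓ := hTc.trans hV
  set B := Fintype.piFinset (fun i : Fin k => if i ∈ T then ({1,-1} : Finset ℝ) else {1}) with hB
  have hBcard : B.card ≤ 2 ^ ℓ := by
    rw [hB, Fintype.card_piFinset]
    calc (∏ i, (if i ∈ T then ({1,-1} : Finset ℝ) else {1}).card)
        = ∏ i, (if i ∈ T then 2 else 1) := by
          apply Finset.prod_congr rfl
          intro i _
          split
          · rw [Finset.card_insert_of_notMem (by norm_num), Finset.card_singleton]
          · exact Finset.card_singleton _
      _ = 2 ^ T.card := by
          rw [Finset.prod_ite, Finset.prod_const, Finset.prod_const, one_pow, mul_one]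
          congr 1
          simp [Finset.filter_mem_eq_inter]
      _ ≤ 2 ^ ℓ := Nat.pow_le_pow_right (by norm_num) hTℓ
  refine le_trans (Finset.card_le_card_of_injOn
    (fun (w : Fin k → ℝ) i => if i ∈ T then w i else 1) ?_ ?_) hBcard
  · intro w hw
    rw [Finset.mem_coe, Finset.mem_filter, Fintype.mem_piFinset] at hw
    rw [hB, Finset.mem_coe, Fintype.mem_piFinset]
    intro i
    by_cases hi : i ∈ T
    · simpa [hi] using hw.1 i
    · simp [hi]
  · intro w hw w' hw' hww'
    simp only [Finset.coe_filter, Set.mem_setOf_eq, Fintype.mem_piFinset] at hw hw'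
    have hsub : w - w' ∈ V := sub_mem hw.2 hw'.2
    have : w - w' = 0 := by
      refine hT _ hsub (fun i hi => ?_)
      have := congrFun hww' i
      simp only [if_pos hi] at this
      simp [Pi.sub_apply, this]
    have := sub_eq_zero.mp this
    exact this

/-- Lower bound on the access parameter of `{±1}`-protocols with linear decoding. -/
theorem stmt_2 (n k ℓ : ℕ) (hn : 0 < n) (hk : 0 < k) (hℓ : 0 < ℓ) (hℓn : ℓ ≤ n)
    (g : Fin n → (Fin k → ℝ))
    (h : ∀ w : Fin k → ℝ, (∀ i, w i = 1 ∨ w i = -1) →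
      ∃ S : Finset (Fin n), S.card ≤ ℓ ∧ w ∈ Submodule.span ℝ (g '' ↑S)) :
    Nat.choose n ℓ * 2 ^ ℓ ≥ 2 ^ k := by
  classical
  set A := Fintype.piFinset (fun _ : Fin k => ({1,-1} : Finset ℝ)) with hA
  have hAcard : A.card = 2 ^ k := by
    rw [hA, Fintype.card_piFinset, Finset.prod_const, Finset.card_univ, Fintype.card_fin]
    congr 1
    rw [Finset.card_insert_of_notMem (by norm_num), Finset.card_singleton]
  have hex : ∀ w : Fin k → ℝ, ∃ S : Finset (Fin n),
      w ∈ A → (S.card = ℓ ∧ w ∈ Submodule.span ℝ (g '' ↑S)) := by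
    intro w
    by_cases hw : w ∈ A
    · have hw' : ∀ i, w i = 1 ∨ w i = -1 := by
        intro i
        have := (Fintype.mem_piFinset.mp hw) i
        simpa using this
      obtain ⟨S, hSc, hSs⟩ := h w hw'
      obtain ⟨S', hSS', hS'c⟩ := Finset.exists_superset_card_eq hSc (by simpa using hℓn)
      refine ⟨S', fun _ => ⟨hS'c, ?_⟩⟩
      exact Submodule.span_mono (Set.image_mono hSS') hSs
    · exact ⟨∅, fun hw' => absurd hw' hw⟩
  choose f hf using hex
  have key : A.card ≤ 2 ^ ℓ * (Finset.powersetCard ℓ (Finset.univ : Finset (Fin n))).card := by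
    apply Finset.card_le_mul_card_image_of_maps_to (f := f)
    · intro w hw
      rw [Finset.mem_powersetCard]
      exact ⟨Finset.subset_univ _, (hf w hw).1⟩
    · intro S hS
      have : (A.filter (fun w => f w = S)) ⊆ A.filter (· ∈ Submodule.span ℝ (g '' ↑S)) := by
        intro w hw
        rw [Finset.mem_filter] at hw ⊢
        exact ⟨hw.1, hw.2 ▸ (hf w hw.1).2⟩
      refine le_trans (Finset.card_le_card this) ?_
      apply count_in_span
      have h1 : Submodule.span ℝ (g '' ↑S) = Submodule.span ℝ (↑(S.image g) : Set (Fin k → ℝ)) := by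
        rw [Finset.coe_image]
      rw [h1]
      calc Module.finrank ℝ (Submodule.span ℝ (↑(S.image g) : Set (Fin k → ℝ)))
          ≤ (S.image g).card := finrank_span_finset_le_card _
        _ ≤ S.card := Finset.card_image_le
        _ ≤ ℓ := by
            rw [Finset.mem_powersetCard] at hS
            omega
  rw [hAcard, Finset.card_powersetCard, Finset.card_univ, Fintype.card_fin] at key
  exact key.trans_eq (mul_comm _ _)
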